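/- Let Q be a bipartite quiver on a finite vertex set V. For a map ρ : V → [1,∞) define Zρ : V → ℝ by Zρ(v) = sqrt( Π_u ρ(u)^{A(v,u)} + Π_w ρ(w)^{B(v,w)} ). Then the following are equivalent: (1) Q has a strictly subadditive labeling; (2) there exists ρ₁ : V → ℝ with ρ₁(v) > 1 for all v and 1 < Zρ₁(v) < ρ₁(v) for all v ∈ V; (3) Q has a fixed point. -/

import Mathlib

open scoped BigOperators

/-- A bipartite quiver on a finite vertex set `V`, encoded by a bipartition `eps`
and the two symmetric edge-multiplicity matrices `A` (arrows from `eps = 0` to `eps = 1`)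
and `B` (arrows from `eps = 1` to `eps = 0`). -/
def BipartiteData {V : Type} [Fintype V] (eps : V → ℤ) (A B : V → V → ℕ) : Prop :=
  (∀ v, eps v = 0 ∨ eps v = 1) ∧
  (∀ u v, A u v = A v u) ∧
  (∀ u v, B u v = B v u) ∧
  (∀ v, A v v = 0) ∧
  (∀ v, B v v = 0) ∧
  (∀ u v, eps u = eps v → A u v = 0 ∧ B u v = 0) ∧
  (∀ u v, A u v * B u v = 0)

/-- A bipartite quiver is recurrent iff the matrices `A` and `B` commute. -/
def RecurrentQuiver {V : Type} [Fintype V] (A B : V → V → ℕ) : Prop :=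
  ∀ u v, (∑ w, A u w * B w v) = ∑ w, B u w * A w v

/-- A fixed point of the `T`-system dynamics: `ρ : V → ℝ` with `ρ v > 1` and
`ρ v ^ 2 = ∏ u, ρ u ^ A v u + ∏ u, ρ u ^ B v u` for all `v`. -/
def IsFixedPoint {V : Type} [Fintype V] (A B : V → V → ℕ) (rho : V → ℝ) : Prop :=
  (∀ v, 1 < rho v) ∧
  (∀ v, rho v ^ 2 = (∏ u, rho u ^ A v u) + (∏ u, rho u ^ B v u))

/-- A strictly subadditive labeling: `ν : V → ℝ` positive with
`2ν v > Σ_u A v u * ν u` and `2ν v > Σ_u B v u * ν u` for all `v`. -/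
def IsStrictlySubadditiveLabeling {V : Type} [Fintype V] (A B : V → V → ℕ)
    (nu : V → ℝ) : Prop :=
  (∀ v, 0 < nu v) ∧
  (∀ v, (∑ u, (A v u : ℝ) * nu u) < 2 * nu v) ∧
  (∀ v, (∑ u, (B v u : ℝ) * nu u) < 2 * nu v)

/-- The operator `Z` of Section 4 of the paper. -/
noncomputable def Zop {V : Type} [Fintype V] (A B : V → V → ℕ) (rho : V → ℝ) : V → ℝ :=
  fun v => Real.sqrt ((∏ u, rho u ^ A v u) + (∏ u, rho u ^ B v u))

private lemma exp_prod_aux {V : Type} [Fintype V] (C : V → V → ℕ) (nu : V → ℝ) (t : ℝ) (v : V) :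
    (∏ u, Real.exp (t * nu u) ^ C v u) = Real.exp (t * ∑ u, (C v u : ℝ) * nu u) := by
  have : ∀ u : V, Real.exp (t * nu u) ^ C v u = Real.exp ((C v u : ℝ) * (t * nu u)) := by
    intro u; rw [Real.exp_nat_mul]
  rw [Finset.prod_congr rfl (fun u _ => this u), ← Real.exp_sum]
  congr 1
  rw [Finset.mul_sum]
  exact Finset.sum_congr rfl fun u _ => by ring

private lemma one_le_prod_pow {V : Type} [Fintype V] (r : V → ℝ) (C : V → ℕ)
    (hr : ∀ v, 1 ≤ r v) : (1:ℝ) ≤ ∏ u, r u ^ C u := by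
  calc (1:ℝ) = ∏ _u : V, (1:ℝ) := by simp
    _ ≤ ∏ u, r u ^ C u :=
      Finset.prod_le_prod (by simp) (fun u _ => one_le_pow₀ (hr u))

private lemma ssl_to_contraction {V : Type} [Fintype V] (A B : V → V → ℕ)
    (nu : V → ℝ) (h : IsStrictlySubadditiveLabeling A B nu) :
    ∃ rho₁ : V → ℝ, (∀ v, 1 < rho₁ v) ∧
      (∀ v, 1 < Zop A B rho₁ v ∧ Zop A B rho₁ v < rho₁ v) := by
  obtain ⟨hpos, hA, hB⟩ := h
  set a : V → ℝ := fun v => ∑ u, (A v u : ℝ) * nu u with ha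
  set b : V → ℝ := fun v => ∑ u, (B v u : ℝ) * nu u with hb
  have key : ∀ᶠ t : ℝ in Filter.atTop,
      ∀ v, Real.exp (t * (a v - 2 * nu v)) < 1/2 ∧
        Real.exp (t * (b v - 2 * nu v)) < 1/2 := by
    rw [Filter.eventually_all]
    intro v
    have gen : ∀ c : ℝ, c < 0 → ∀ᶠ t : ℝ in Filter.atTop, Real.exp (t * c) < 1/2 := by
      intro c hc
      have h1 : Filter.Tendsto (fun t : ℝ => Real.exp (t * c)) Filter.atTop (nhds 0) :=
        Real.tendsto_exp_atBot.comp (Filter.tendsto_id.atTop_mul_const_of_neg hc)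
      exact h1.eventually (gt_mem_nhds (by norm_num : (0:ℝ) < 1/2))
    exact (gen _ (by linarith [hA v])).and (gen _ (by linarith [hB v]))
  obtain ⟨t, ⟨ht, ht1⟩⟩ := (key.and (Filter.eventually_ge_atTop (1:ℝ))).exists
  have htpos : 0 < t := lt_of_lt_of_le one_pos ht1
  refine ⟨fun v => Real.exp (t * nu v), ?_, ?_⟩
  · intro v
    rw [show (1:ℝ) = Real.exp 0 from Real.exp_zero.symm]
    exact Real.exp_lt_exp.mpr (mul_pos (lt_of_lt_of_le one_pos ht1) (hpos v))
  · intro v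
    have hZ : Zop A B (fun v => Real.exp (t * nu v)) v =
        Real.sqrt (Real.exp (t * a v) + Real.exp (t * b v)) := by
      unfold Zop
      rw [exp_prod_aux A nu t v, exp_prod_aux B nu t v]
    have hanonneg : 0 ≤ a v := Finset.sum_nonneg fun u _ =>
      mul_nonneg (Nat.cast_nonneg _) (le_of_lt (hpos u))
    have hbnonneg : 0 ≤ b v := Finset.sum_nonneg fun u _ =>
      mul_nonneg (Nat.cast_nonneg _) (le_of_lt (hpos u))
    constructor
    · rw [hZ]
      apply Real.lt_sqrt_of_sq_lt
      have e1 : (1:ℝ) ≤ Real.exp (t * a v) := Real.one_le_exp (by positivity)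
      have e2 : (1:ℝ) ≤ Real.exp (t * b v) := Real.one_le_exp (by positivity)
      nlinarith
    · rw [hZ, Real.sqrt_lt' (by positivity)]
      have hsq : Real.exp (t * nu v) ^ 2 = Real.exp (t * (2 * nu v)) := by
        rw [← Real.exp_nat_mul]; norm_num; ring_nf
      rw [hsq]
      have e1 : Real.exp (t * a v) < 1/2 * Real.exp (t * (2 * nu v)) := by
        have : Real.exp (t * a v) =
            Real.exp (t * (a v - 2 * nu v)) * Real.exp (t * (2 * nu v)) := by
          rw [← Real.exp_add]; ring_nf
        rw [this]
        exact mul_lt_mul_of_pos_right (ht v).1 (Real.exp_pos _)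
      have e2 : Real.exp (t * b v) < 1/2 * Real.exp (t * (2 * nu v)) := by
        have : Real.exp (t * b v) =
            Real.exp (t * (b v - 2 * nu v)) * Real.exp (t * (2 * nu v)) := by
          rw [← Real.exp_add]; ring_nf
        rw [this]
        exact mul_lt_mul_of_pos_right (ht v).2 (Real.exp_pos _)
      linarith

private lemma fp_to_ssl {V : Type} [Fintype V] (A B : V → V → ℕ)
    (rho : V → ℝ) (h : IsFixedPoint A B rho) :
    ∃ nu : V → ℝ, IsStrictlySubadditiveLabeling A B nu := by
  obtain ⟨h1, h2⟩ := h
  have hpos : ∀ v, 0 < rho v := fun v => lt_trans one_pos (h1 v)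
  have hprod : ∀ (C : V → V → ℕ) (v : V), (1:ℝ) ≤ ∏ u, rho u ^ C v u :=
    fun C v => one_le_prod_pow rho (C v) (fun u => le_of_lt (h1 u))
  refine ⟨fun v => Real.log (rho v), fun v => Real.log_pos (h1 v), ?_, ?_⟩
  · intro v
    have hlt : (∏ u, rho u ^ A v u) < rho v ^ 2 := by
      have := hprod B v; linarith [h2 v]
    have hlog := Real.log_lt_log (lt_of_lt_of_le one_pos (hprod A v)) hlt
    rw [Real.log_prod (fun u _ => ne_of_gt (pow_pos (hpos u) _))] at hlog
    simp only [Real.log_pow, Nat.cast_ofNat] at hlog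
    simpa using hlog
  · intro v
    have hlt : (∏ u, rho u ^ B v u) < rho v ^ 2 := by
      have := hprod A v; linarith [h2 v]
    have hlog := Real.log_lt_log (lt_of_lt_of_le one_pos (hprod B v)) hlt
    rw [Real.log_prod (fun u _ => ne_of_gt (pow_pos (hpos u) _))] at hlog
    simp only [Real.log_pow, Nat.cast_ofNat] at hlog
    simpa using hlog

private lemma Zop_mono {V : Type} [Fintype V] (A B : V → V → ℕ) {r s : V → ℝ}
    (hr : ∀ v, 0 ≤ r v) (hrs : ∀ v, r v ≤ s v) (v : V) : Zop A B r v ≤ Zop A B s v := by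
  unfold Zop
  apply Real.sqrt_le_sqrt
  have H : ∀ C : V → V → ℕ, (∏ u, r u ^ C v u) ≤ ∏ u, s u ^ C v u := fun C =>
    Finset.prod_le_prod (fun u _ => pow_nonneg (hr u) _)
      (fun u _ => pow_le_pow_left₀ (hr u) (hrs u) _)
  linarith [H A, H B]

private lemma Zop_ge {V : Type} [Fintype V] (A B : V → V → ℕ) {r : V → ℝ}
    (hr : ∀ v, 1 ≤ r v) (v : V) : Real.sqrt 2 ≤ Zop A B r v := by
  unfold Zop
  apply Real.sqrt_le_sqrt
  have h1 : (1:ℝ) ≤ ∏ u, r u ^ A v u := one_le_prod_pow r (A v) hr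
  have h2 : (1:ℝ) ≤ ∏ u, r u ^ B v u := one_le_prod_pow r (B v) hr
  linarith

private lemma contraction_to_fp {V : Type} [Fintype V] (A B : V → V → ℕ)
    (rho₁ : V → ℝ) (h1 : ∀ v, 1 < rho₁ v)
    (h2 : ∀ v, 1 < Zop A B rho₁ v ∧ Zop A B rho₁ v < rho₁ v) :
    ∃ rho : V → ℝ, IsFixedPoint A B rho := by
  have sqrt2_gt : (1:ℝ) < Real.sqrt 2 := by
    apply Real.lt_sqrt_of_sq_lt; norm_num
  set seq : ℕ → V → ℝ := fun n => (Zop A B)^[n] rho₁ with hseq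
  have hsucc : ∀ n, seq (n+1) = Zop A B (seq n) := by
    intro n; simp only [hseq, Function.iterate_succ_apply']
  have hone : ∀ n v, 1 ≤ seq n v := by
    intro n
    induction n with
    | zero => exact fun v => le_of_lt (h1 v)
    | succ m ih =>
      intro v
      rw [hsucc]
      exact le_trans (le_of_lt sqrt2_gt) (Zop_ge A B ih v)
  have hdec : ∀ n v, seq (n+1) v ≤ seq n v := by
    intro n
    induction n with
    | zero => exact fun v => le_of_lt (h2 v).2
    | succ m ih =>
      intro v
      rw [hsucc (m+1)]
      calc Zop A B (seq (m+1)) v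
          ≤ Zop A B (seq m) v :=
            Zop_mono A B (fun u => le_trans zero_le_one (hone (m+1) u)) ih v
        _ = seq (m+1) v := (congrFun (hsucc m) v).symm
  have hanti : ∀ v, Antitone (fun n => seq n v) :=
    fun v => antitone_nat_of_succ_le (fun n => hdec n v)
  have hbdd : ∀ v, BddBelow (Set.range fun n => seq n v) := by
    intro v
    exact ⟨1, by rintro x ⟨n, rfl⟩; exact hone n v⟩
  set rho : V → ℝ := fun v => ⨅ n, seq n v with hrho
  have hlim : ∀ v, Filter.Tendsto (fun n => seq n v) Filter.atTop (nhds (rho v)) :=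
    fun v => tendsto_atTop_ciInf (hanti v) (hbdd v)
  have hrho_ge : ∀ v, Real.sqrt 2 ≤ rho v := by
    intro v
    apply ge_of_tendsto (hlim v)
    filter_upwards [Filter.eventually_ge_atTop 1] with n hn
    obtain ⟨m, rfl⟩ := Nat.exists_eq_add_of_le hn
    rw [show 1 + m = m + 1 by ring, hsucc]
    exact Zop_ge A B (hone m) v
  have hrho1 : ∀ v, 1 < rho v := fun v => lt_of_lt_of_le sqrt2_gt (hrho_ge v)
  refine ⟨rho, hrho1, ?_⟩
  intro v
  have t1 : Filter.Tendsto (fun n => seq (n+1) v) Filter.atTop (nhds (rho v)) :=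
    (hlim v).comp (Filter.tendsto_add_atTop_nat 1)
  have t2 : Filter.Tendsto (fun n => seq (n+1) v) Filter.atTop
      (nhds (Real.sqrt ((∏ u, rho u ^ A v u) + (∏ u, rho u ^ B v u)))) := by
    have tA : Filter.Tendsto (fun n => ∏ u, seq n u ^ A v u) Filter.atTop
        (nhds (∏ u, rho u ^ A v u)) :=
      tendsto_finset_prod _ (fun u _ => (hlim u).pow _)
    have tB : Filter.Tendsto (fun n => ∏ u, seq n u ^ B v u) Filter.atTop
        (nhds (∏ u, rho u ^ B v u)) :=
      tendsto_finset_prod _ (fun u _ => (hlim u).pow _)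
    have := (tA.add tB).sqrt
    refine this.congr (fun n => ?_)
    rw [hsucc]; rfl
  have heq := tendsto_nhds_unique t1 t2
  have hnn : (0:ℝ) ≤ (∏ u, rho u ^ A v u) + (∏ u, rho u ^ B v u) := by
    have hA := one_le_prod_pow rho (A v) (fun u => le_of_lt (hrho1 u))
    have hB := one_le_prod_pow rho (B v) (fun u => le_of_lt (hrho1 u))
    linarith
  rw [heq, Real.sq_sqrt hnn]

/-- the equivalence of (1) the strictly subadditive labeling property,
(2) the existence of `ρ₁ > 1` with `1 < Zρ₁ < ρ₁`, and (3) the fixed point property. -/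
theorem ssl_iff_Zcontraction_iff_fixedPoint
    {V : Type} [Fintype V] [DecidableEq V]
    (eps : V → ℤ) (A B : V → V → ℕ)
    (hbip : BipartiteData eps A B) :
    ((∃ nu : V → ℝ, IsStrictlySubadditiveLabeling A B nu) ↔
      (∃ rho₁ : V → ℝ, (∀ v, 1 < rho₁ v) ∧
        (∀ v, 1 < Zop A B rho₁ v ∧ Zop A B rho₁ v < rho₁ v))) ∧
    ((∃ rho₁ : V → ℝ, (∀ v, 1 < rho₁ v) ∧
        (∀ v, 1 < Zop A B rho₁ v ∧ Zop A B rho₁ v < rho₁ v)) ↔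
      (∃ rho : V → ℝ, IsFixedPoint A B rho)) := by
  constructor
  · constructor
    · rintro ⟨nu, hnu⟩
      exact ssl_to_contraction A B nu hnu
    · rintro ⟨rho₁, hr1, hr2⟩
      obtain ⟨rho, hrho⟩ := contraction_to_fp A B rho₁ hr1 hr2
      exact fp_to_ssl A B rho hrho
  · constructor
    · rintro ⟨rho₁, hr1, hr2⟩
      exact contraction_to_fp A B rho₁ hr1 hr2
    · rintro ⟨rho, hrho⟩
      obtain ⟨nu, hnu⟩ := fp_to_ssl A B rho hrho
      exact ssl_to_contraction A B nu hnu
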